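/- Let k₁, k₂, k₃, k₄ ∈ ℂ and set A = k₁k₂ + k₃k₄, B = k₂k₃ + k₁k₄, C = k₁k₃ + k₂k₄, D = 4 − k₁² − k₂² − k₃² − k₄² − k₁k₂k₃k₄. Fix t ∈ ℂ with t ≠ ±2. Then the polynomial t² + y² + z² + t·y·z − A·t − B·y − C·z − D ∈ ℂ[y,z] is a product of two polynomials of degree 1 if and only if (k₁² + k₂² + t² − t·k₁k₂ − 4)·(k₃² + k₄² + t² − t·k₃k₄ − 4) = 0. -/

import Mathlib

open MvPolynomial

lemma affine_of_totalDegree_le_one (p : MvPolynomial (Fin 2) ℂ) (hp : p.totalDegree ≤ 1) :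
    p = C (coeff 0 p) + C (coeff (Finsupp.single 0 1) p) * X 0 +
      C (coeff (Finsupp.single 1 1) p) * X 1 := by
  apply MvPolynomial.ext
  intro m
  rw [coeff_add, coeff_add, coeff_C, coeff_C_mul, coeff_C_mul, coeff_X', coeff_X']
  by_cases h0 : m = 0
  · subst h0
    simp [Finsupp.single_eq_zero]
  by_cases h1 : m = Finsupp.single 0 1
  · subst h1
    have : (Finsupp.single (1 : Fin 2) 1 : Fin 2 →₀ ℕ) ≠ Finsupp.single 0 1 := by
      simp [Finsupp.single_eq_single_iff]
    simp [Ne.symm h0, this]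
  by_cases h2 : m = Finsupp.single 1 1
  · subst h2
    have : (Finsupp.single (0 : Fin 2) 1 : Fin 2 →₀ ℕ) ≠ Finsupp.single 1 1 := by
      simp [Finsupp.single_eq_single_iff]
    simp [Ne.symm h0, this]
  · have hm : coeff m p = 0 := by
      by_contra hc
      have hs : m ∈ p.support := by simpa [MvPolynomial.mem_support_iff] using hc
      have hd := MvPolynomial.le_totalDegree hs
      have hsum : (m.sum fun _ e => e) = m 0 + m 1 := by
        rw [Finsupp.sum_fintype]
        · simp [Fin.sum_univ_two]
        · intro i; rfl
      have hle : m 0 + m 1 ≤ 1 := by rw [hsum] at hd; exact hd.trans hp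
      by_cases hm0 : m 0 = 0
      · by_cases hm1 : m 1 = 0
        · exact h0 (Finsupp.ext fun i => by fin_cases i <;> simp [hm0, hm1])
        · have hm1' : m 1 = 1 := by omega
          exact h2 (Finsupp.ext fun i => by
            fin_cases i <;> simp [hm0, hm1', Finsupp.single_apply])
      · have hm0' : m 0 = 1 := by omega
        have hm1 : m 1 = 0 := by omega
        exact h1 (Finsupp.ext fun i => by
          fin_cases i <;> simp [hm0', hm1, Finsupp.single_apply])
    rw [hm, if_neg (fun h => h0 h.symm), if_neg (fun h => h1 h.symm),
      if_neg (fun h => h2 h.symm)]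
    ring


lemma totalDegree_affine (a b : ℂ) :
    (X 0 + C a * X 1 + C b : MvPolynomial (Fin 2) ℂ).totalDegree = 1 := by
  apply le_antisymm
  · refine (totalDegree_add _ _).trans ?_
    simp only [max_le_iff]
    constructor
    · refine (totalDegree_add _ _).trans ?_
      simp only [max_le_iff, totalDegree_X]
      refine ⟨le_refl _, (totalDegree_mul _ _).trans ?_⟩
      simp [totalDegree_X, totalDegree_C]
    · simp [totalDegree_C]
  · have hc : coeff (Finsupp.single 0 1) (X 0 + C a * X 1 + C b : MvPolynomial (Fin 2) ℂ) = 1 := by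
      rw [coeff_add, coeff_add, coeff_X, coeff_C_mul, coeff_X', coeff_C]
      have h1 : (Finsupp.single (1 : Fin 2) 1 : Fin 2 →₀ ℕ) ≠ Finsupp.single 0 1 := by
        simp [Finsupp.single_eq_single_iff]
      have h2 : (Finsupp.single (0 : Fin 2) 1 : Fin 2 →₀ ℕ) ≠ 0 := by
        simp [Finsupp.single_eq_zero]
      rw [if_neg h1, if_neg (show ¬ ((0 : Fin 2 →₀ ℕ) = Finsupp.single 0 1) from fun h => h2 h.symm)]
      simp
    have hs : Finsupp.single (0 : Fin 2) 1 ∈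
        (X 0 + C a * X 1 + C b : MvPolynomial (Fin 2) ℂ).support := by
      rw [MvPolynomial.mem_support_iff, hc]; exact one_ne_zero
    have := MvPolynomial.le_totalDegree hs
    simpa using this

theorem four_holed_sphere_degenerate_fiber (k₁ k₂ k₃ k₄ t : ℂ)
    (ht : t ≠ 2) (ht' : t ≠ -2) :
    (∃ p q : MvPolynomial (Fin 2) ℂ, p.totalDegree = 1 ∧ q.totalDegree = 1 ∧
      (C (t ^ 2) + (X 0) ^ 2 + (X 1) ^ 2 + C t * X 0 * X 1 -
        C ((k₁ * k₂ + k₃ * k₄) * t) - C (k₂ * k₃ + k₁ * k₄) * X 0 -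
        C (k₁ * k₃ + k₂ * k₄) * X 1 -
        C (4 - k₁ ^ 2 - k₂ ^ 2 - k₃ ^ 2 - k₄ ^ 2 - k₁ * k₂ * k₃ * k₄) :
          MvPolynomial (Fin 2) ℂ) = p * q) ↔
    (k₁ ^ 2 + k₂ ^ 2 + t ^ 2 - t * k₁ * k₂ - 4) *
      (k₃ ^ 2 + k₄ ^ 2 + t ^ 2 - t * k₃ * k₄ - 4) = 0 := by
  constructor
  · rintro ⟨p, q, hp, hq, heq⟩
    rw [affine_of_totalDegree_le_one p (le_of_eq hp),
        affine_of_totalDegree_le_one q (le_of_eq hq)] at heq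
    set a0 := coeff 0 p
    set a1 := coeff (Finsupp.single 0 1) p
    set a2 := coeff (Finsupp.single 1 1) p
    set b0 := coeff 0 q
    set b1 := coeff (Finsupp.single 0 1) q
    set b2 := coeff (Finsupp.single 1 1) q
    have hpt : ∀ y z : ℂ,
        t ^ 2 + y ^ 2 + z ^ 2 + t * y * z - (k₁ * k₂ + k₃ * k₄) * t -
          (k₂ * k₃ + k₁ * k₄) * y - (k₁ * k₃ + k₂ * k₄) * z -
          (4 - k₁ ^ 2 - k₂ ^ 2 - k₃ ^ 2 - k₄ ^ 2 - k₁ * k₂ * k₃ * k₄) =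
        (a0 + a1 * y + a2 * z) * (b0 + b1 * y + b2 * z) := by
      intro y z
      have h := congrArg (MvPolynomial.eval ![y, z]) heq
      simpa using h
    have h10 := hpt 1 0
    have hm0 := hpt (-1) 0
    have h01 := hpt 0 1
    have h0m := hpt 0 (-1)
    have h11 := hpt 1 1
    have h00 := hpt 0 0
    linear_combination
      (-((2*a0*b0 - a2^2*b0^2 - a0^2*b2^2)/2 +
        ((k₂*k₃+k₁*k₄) + (-(a0*b1+a1*b0)) - (k₁*k₃+k₂*k₄)*t)/2 -
        (-((a0*b0)*(t+(a1*b2+a2*b1)) - (-(a0*b1+a1*b0))*(-(a0*b2+a2*b0)))))) * h10 +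
      (-((2*a0*b0 - a2^2*b0^2 - a0^2*b2^2)/2 -
        ((k₂*k₃+k₁*k₄) + (-(a0*b1+a1*b0)) - (k₁*k₃+k₂*k₄)*t)/2)) * hm0 +
      (-((2*a0*b0 - a1^2*b0^2 - a0^2*b1^2)/2 +
        ((k₁*k₃+k₂*k₄) + (-(a0*b2+a2*b0)) - (-(a0*b1+a1*b0))*t)/2 -
        (-((a0*b0)*(t+(a1*b2+a2*b1)) - (-(a0*b1+a1*b0))*(-(a0*b2+a2*b0)))))) * h01 +
      (-((2*a0*b0 - a1^2*b0^2 - a0^2*b1^2)/2 -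
        ((k₁*k₃+k₂*k₄) + (-(a0*b2+a2*b0)) - (-(a0*b1+a1*b0))*t)/2)) * h0m +
      (-(-((a0*b0)*(t+(a1*b2+a2*b1)) - (-(a0*b1+a1*b0))*(-(a0*b2+a2*b0))))) * h11 +
      ((2*a0*b0 - a2^2*b0^2 - a0^2*b2^2) + (2*a0*b0 - a1^2*b0^2 - a0^2*b1^2) -
        (-((a0*b0)*(t+(a1*b2+a2*b1)) - (-(a0*b1+a1*b0))*(-(a0*b2+a2*b0)))) -
        (-(t^2-4))) * h00
  · intro H
    obtain ⟨s, hs2⟩ := IsAlgClosed.exists_pow_nat_eq (t^2 - 4) (n := 2) (by norm_num)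
    have hs0 : s ≠ 0 := by
      intro h
      rw [h] at hs2
      have h24 : (t - 2) * (t + 2) = 0 := by linear_combination -hs2
      rcases mul_eq_zero.mp h24 with h' | h'
      · exact ht (by linear_combination h')
      · exact ht' (by linear_combination h')
    set ω := (t + s) / 2 with hω
    set c := ((k₁*k₃+k₂*k₄) - (k₂*k₃+k₁*k₄) * ω) / s with hc
    set d := -(k₂*k₃+k₁*k₄) - c with hd
    have hcs : c * s = (k₁*k₃+k₂*k₄) - (k₂*k₃+k₁*k₄) * ω := div_mul_cancel₀ _ hs0
    refine ⟨X 0 + C ω * X 1 + C c, X 0 + C (t - ω) * X 1 + C d,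
      totalDegree_affine _ _, totalDegree_affine _ _, ?_⟩
    apply MvPolynomial.funext
    intro x
    simp only [map_add, map_sub, map_mul, map_pow, eval_C, eval_X]
    set y := x 0
    set z := x 1
    apply mul_right_cancel₀ (pow_ne_zero 2 hs0)
    linear_combination
      (-4 + (1/4)*s^2*z^2 + t^2 + k₄^2 - k₃*k₄*t + k₃^2 + k₂^2
        - (1/4)*k₂^2*k₃^2 - k₁*k₂*t + (1/2)*k₁*k₂*k₃*k₄ + k₁^2 - (1/4)*k₁^2*k₄^2) * hs2 +
      H +
      ((y*s + ω*z*s + ((k₁*k₃+k₂*k₄) - (k₂*k₃+k₁*k₄)*ω)) -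
        (y*s + (t-ω)*z*s - (k₂*k₃+k₁*k₄)*s - ((k₁*k₃+k₂*k₄) - (k₂*k₃+k₁*k₄)*ω)) +
        (c*s - ((k₁*k₃+k₂*k₄) - (k₂*k₃+k₁*k₄)*ω))) * hcs
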